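/- Let m ≥ 2 be an integer, α > 2/m a real number, and γ a real number with 0 < γ < 1 − 1/(m+α). Then a > 0, the quadratic s ↦ a·s^2 − 2b·s + c satisfies a·s^2 − 2b·s + c ≥ c − b^2/a for all real s, and moreover c − b^2/a ≥ 0 if and only if P_{m,α}(γ) ≥ 0. -/

import Mathlib

/-- The quartic polynomial `P_{m,α}(γ)` from the analysis of the lower solution. -/
noncomputable def Pquartic (m : ℕ) (α : ℝ) (γ : ℝ) : ℝ :=
  ((m : ℝ) + α) ^ 3 * γ ^ 4
    + (-(((m : ℝ) + α) ^ 2 * ((m : ℝ) + α + 1))) * γ ^ 3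
    + (((m : ℝ) + α) * (2 * (m : ℝ) + 6 * α - 4 * (m : ℝ) * α - 1)) * γ ^ 2
    + (4 * (m : ℝ) ^ 2 * α + 4 * α ^ 2 * (m : ℝ) - 4 * α ^ 2 - 5 * α - (m : ℝ) + 1) * γ
    + (-(8 * ((m : ℝ) - 1) * α))

/-- For `m ≥ 2`, `α > 2/m` and `γ ∈ (0, 1 − 1/(m+α))`: the leading coefficient `a` is
positive, the quadratic `s ↦ a s² − 2 b s + c` is bounded below by `c − b²/a`, and
`c − b²/a ≥ 0` if and only if `P_{m,α}(γ) ≥ 0`. -/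
theorem quadratic_lower_bound (m : ℕ) (hm : 2 ≤ m) (α : ℝ) (hα : 2 / (m : ℝ) < α)
    (γ : ℝ) (hγ0 : 0 < γ) (hγ1 : γ < 1 - 1 / ((m : ℝ) + α)) :
    let a : ℝ := (1 - γ) * (((m : ℝ) + α - 1) ^ 2 - γ ^ 2 * ((m : ℝ) + α) ^ 2)
    let b : ℝ := ((m : ℝ) - α - 1) * (((m : ℝ) + α - 1) - γ * ((m : ℝ) + α))
    let c : ℝ := (1 - γ) * γ ^ 2 * ((m : ℝ) + α) ^ 2 - 2 * γ * ((m : ℝ) + α - 1)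
      + (1 - γ) * ((m : ℝ) - α - 1) ^ 2
    0 < a ∧ (∀ s : ℝ, a * s ^ 2 - 2 * b * s + c ≥ c - b ^ 2 / a) ∧
      (c - b ^ 2 / a ≥ 0 ↔ Pquartic m α γ ≥ 0) := by
  intro a b c
  have hm2 : (2:ℝ) ≤ (m:ℝ) := by exact_mod_cast hm
  have hα0 : 0 < α := lt_trans (by positivity) hα
  have hma : (0:ℝ) < (m:ℝ) + α := by linarith
  have hq : 0 < ((m:ℝ) + α - 1) - γ * ((m:ℝ) + α) := by
    have h1 : γ * ((m:ℝ) + α) < (1 - 1/((m:ℝ)+α)) * ((m:ℝ)+α) :=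
      mul_lt_mul_of_pos_right hγ1 hma
    have h2 : (1 - 1/((m:ℝ)+α)) * ((m:ℝ)+α) = (m:ℝ) + α - 1 := by
      field_simp
    linarith
  have hγlt1 : γ < 1 := by
    have : 1/((m:ℝ)+α) > 0 := by positivity
    linarith
  have ha : 0 < a := by
    have : a = (1-γ) * ((((m:ℝ)+α-1) - γ*((m:ℝ)+α)) * (((m:ℝ)+α-1) + γ*((m:ℝ)+α))) := by
      show (1 - γ) * (((m : ℝ) + α - 1) ^ 2 - γ ^ 2 * ((m : ℝ) + α) ^ 2) = _
      ring
    rw [this]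
    have h3 : 0 < ((m:ℝ)+α-1) + γ*((m:ℝ)+α) := by nlinarith
    have h4 : 0 < 1 - γ := by linarith
    exact mul_pos h4 (mul_pos hq h3)
  refine ⟨ha, ?_, ?_⟩
  · intro s
    have key : a * s ^ 2 - 2 * b * s + c - (c - b ^ 2 / a) = (a*s - b)^2 / a := by
      field_simp
      ring
    have : (a*s - b)^2 / a ≥ 0 := by positivity
    linarith
  · have hfac : a * c - b ^ 2 = (γ * (((m:ℝ)+α-1) - γ*((m:ℝ)+α))) * Pquartic m α γ := by
      show (1 - γ) * (((m : ℝ) + α - 1) ^ 2 - γ ^ 2 * ((m : ℝ) + α) ^ 2) *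
        ((1 - γ) * γ ^ 2 * ((m : ℝ) + α) ^ 2 - 2 * γ * ((m : ℝ) + α - 1)
          + (1 - γ) * ((m : ℝ) - α - 1) ^ 2)
        - (((m : ℝ) - α - 1) * (((m : ℝ) + α - 1) - γ * ((m : ℝ) + α))) ^ 2 = _
      unfold Pquartic
      ring
    have hcb : c - b^2/a = (a*c - b^2)/a := by field_simp
    rw [hcb, hfac, ge_iff_le, ge_iff_le, le_div_iff₀ ha, zero_mul]
    have hpos : 0 < γ * (((m:ℝ)+α-1) - γ*((m:ℝ)+α)) := by positivity
    constructor
    · intro h; nlinarith [h]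
    · intro h; nlinarith [h]
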